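/- Let G be a group, x ∈ G, and D = Cyc_G(x). Then Cyc_D(D) = {d ∈ D | ⟨d,e⟩ is cyclic for all e ∈ D} is a subgroup of G containing x, and every finitely generated subgroup of Cyc_D(D) is cyclic (i.e., Cyc_D(D) is locally cyclic). -/

import Mathlib

set_option linter.unusedSectionVars false

section Helpers

open Subgroup

variable {G : Type*} [Group G]

lemma isCyclic_zpowers (g : G) : IsCyclic ↥(Subgroup.zpowers g) := by
  refine ⟨⟨⟨g, Subgroup.mem_zpowers g⟩, ?_⟩⟩
  rintro ⟨y, hy⟩
  obtain ⟨m, rfl⟩ := Subgroup.mem_zpowers_iff.mp hy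
  exact ⟨m, by ext; simp⟩

lemma cyclic_of_le_zpowers {s : Set G} {c : G} (h : s ⊆ ↑(Subgroup.zpowers c)) :
    IsCyclic ↥(Subgroup.closure s) :=
  haveI := _root_.isCyclic_zpowers c
  Subgroup.isCyclic_of_le ((Subgroup.closure_le _).2 h)

lemma pair_swap_cyclic {u v : G} (h : IsCyclic ↥(Subgroup.closure ({u, v} : Set G))) :
    IsCyclic ↥(Subgroup.closure ({v, u} : Set G)) := by
  rwa [Set.pair_comm]

lemma exists_common_gen {a b : G} (h : IsCyclic ↥(Subgroup.closure ({a, b} : Set G))) :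
    ∃ c ∈ Subgroup.closure ({a, b} : Set G), a ∈ zpowers c ∧ b ∈ zpowers c := by
  obtain ⟨g, hg⟩ := h.exists_generator
  have ha : a ∈ closure {a, b} := subset_closure (by simp)
  have hb : b ∈ closure {a, b} := subset_closure (by simp)
  obtain ⟨m, hm⟩ := Subgroup.mem_zpowers_iff.mp (hg ⟨a, ha⟩)
  obtain ⟨k, hk⟩ := Subgroup.mem_zpowers_iff.mp (hg ⟨b, hb⟩)
  refine ⟨↑g, g.2, ⟨m, ?_⟩, ⟨k, ?_⟩⟩
  · simpa using congrArg Subtype.val hm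
  · simpa using congrArg Subtype.val hk


lemma torsion_prod_zmod (q : ℕ) (v : ZMod q × ZMod q) : (q : ℤ) • v = 0 := by
  have h1 : ((q : ℤ) • v).1 = 0 := by
    rw [Prod.smul_fst, zsmul_eq_mul]
    push_cast
    simp [ZMod.natCast_self]
  have h2 : ((q : ℤ) • v).2 = 0 := by
    rw [Prod.smul_snd, zsmul_eq_mul]
    push_cast
    simp [ZMod.natCast_self]
  exact Prod.ext h1 h2

lemma vlem {q : ℕ} (hq : q.Prime) {a : ZMod q × ZMod q}
    (h1 : ((1 : ZMod q), (0 : ZMod q)) ∈ AddSubgroup.zmultiples a)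
    (h2 : ((0 : ZMod q), (1 : ZMod q)) ∈ AddSubgroup.zmultiples a) : False := by
  haveI : Fact q.Prime := ⟨hq⟩
  obtain ⟨k, hk⟩ := AddSubgroup.mem_zmultiples_iff.mp h1
  obtain ⟨l, hl⟩ := AddSubgroup.mem_zmultiples_iff.mp h2
  rw [Prod.ext_iff] at hk hl
  simp only [Prod.smul_fst, Prod.smul_snd] at hk hl
  simp only [zsmul_eq_mul] at hk hl
  have : (1 : ZMod q) = 0 := by
    calc (1 : ZMod q) = ((k : ZMod q) * a.1) * ((l : ZMod q) * a.2) := by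
          rw [hk.1, hl.2, one_mul]
      _ = ((k : ZMod q) * a.2) * ((l : ZMod q) * a.1) := by ring
      _ = 0 := by rw [hk.2, hl.1, zero_mul]
  exact one_ne_zero this

lemma mem_zmultiples_smul_self {V : Type*} [AddCommGroup V] {q : ℕ} (hq : q.Prime)
    (hV : ∀ v : V, (q : ℤ) • v = 0) {w : V} {m : ℤ} (hm : m • w ≠ 0) :
    w ∈ AddSubgroup.zmultiples (m • w) := by
  have hdvd : (Int.gcd m (q : ℤ) : ℤ) ∣ (q : ℤ) := Int.gcd_dvd_right _ _
  have hdvd' : Int.gcd m (q : ℤ) ∣ q := by exact_mod_cast hdvd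
  rcases (Nat.dvd_prime hq).mp hdvd' with hd | hd
  · -- gcd = 1 : Bezout
    have hb := Int.gcd_eq_gcd_ab m (q : ℤ)
    rw [hd] at hb
    refine ⟨Int.gcdA m (q : ℤ), ?_⟩
    have : (m * Int.gcdA m (q : ℤ) + (q : ℤ) * Int.gcdB m (q : ℤ)) • w = w := by
      rw [← hb]; simp
    calc Int.gcdA m (q : ℤ) • m • w = (m * Int.gcdA m (q : ℤ)) • w := by
          rw [mul_comm, mul_smul]
      _ = (m * Int.gcdA m (q : ℤ)) • w + (Int.gcdB m (q : ℤ)) • ((q : ℤ) • w) := by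
          rw [hV w, smul_zero, add_zero]
      _ = (m * Int.gcdA m (q : ℤ) + (q : ℤ) * Int.gcdB m (q : ℤ)) • w := by
          rw [add_smul, ← mul_smul, mul_comm (Int.gcdB m (q : ℤ))]
      _ = w := this
  · -- gcd = q : q ∣ m, contradiction
    exfalso
    have : (q : ℤ) ∣ m := by
      have := Int.gcd_dvd_left (a := m) (b := (q : ℤ))
      rwa [hd] at this
    obtain ⟨t, rfl⟩ := this
    apply hm
    rw [mul_smul, hV]


open scoped DirectSum

section M1

variable {ι : Type} [Fintype ι] [DecidableEq ι]

/-- evaluation hom on a direct sum -/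
def evalHom (β : ι → Type*) [∀ i, AddCommMonoid (β i)] (i : ι) : (⨁ j, β j) →+ β i where
  toFun := fun x => x i
  map_zero' := DFinsupp.zero_apply i
  map_add' := fun x y => DFinsupp.add_apply x y i

@[simp] lemma evalHom_apply (β : ι → Type*) [∀ i, AddCommMonoid (β i)] (i : ι) (x : ⨁ j, β j) :
    evalHom β i x = x i := rfl

lemma isAddCyclic_of_no_surj (A : Type*) [AddCommGroup A] [AddGroup.FG A]
    (h : ∀ q : ℕ, q.Prime → ∀ f : A →+ ZMod q × ZMod q, ¬ Function.Surjective f) :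
    IsAddCyclic A := by
  obtain ⟨n, ι, hι, p, hp, e, ⟨F⟩⟩ := AddCommGroup.equiv_free_prod_directSum_zmod A
  haveI := hι
  classical
  have hsurj : ∀ (q : ℕ), q.Prime →
      ∀ g : ((Fin n →₀ ℤ) × ⨁ i : ι, ZMod (p i ^ e i)) →+ ZMod q × ZMod q,
      ¬ Function.Surjective g := by
    intro q hq g hg
    exact h q hq (g.comp F.toAddMonoidHom) (hg.comp F.surjective)
  suffices hBc : IsAddCyclic ((Fin n →₀ ℤ) × ⨁ i : ι, ZMod (p i ^ e i)) by
    haveI := hBc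
    exact isAddCyclic_of_surjective F.symm.toAddMonoidHom F.symm.surjective
  clear h
  -- the int coordinate homs
  by_cases hA : 2 ≤ n
  · exfalso
    refine hsurj 2 Nat.prime_two
      ((((Int.castAddHom (ZMod 2)).comp (Finsupp.applyAddHom (⟨0, by omega⟩ : Fin n))).comp
          (AddMonoidHom.fst _ _)).prod
       (((Int.castAddHom (ZMod 2)).comp (Finsupp.applyAddHom (⟨1, by omega⟩ : Fin n))).comp
          (AddMonoidHom.fst _ _))) ?_
    rintro ⟨u, v⟩
    obtain ⟨zu, rfl⟩ := ZMod.intCast_surjective u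
    obtain ⟨zv, rfl⟩ := ZMod.intCast_surjective v
    refine ⟨(Finsupp.single ⟨0, by omega⟩ zu + Finsupp.single ⟨1, by omega⟩ zv, 0), ?_⟩
    have hne : (⟨0, by omega⟩ : Fin n) ≠ ⟨1, by omega⟩ := by simp [Fin.ext_iff]
    simp [AddMonoidHom.prod_apply, Finsupp.single_eq_of_ne hne, Finsupp.single_eq_of_ne (Ne.symm hne)]
  by_cases hBc : 1 ≤ n ∧ ∃ i, e i ≠ 0
  · exfalso
    obtain ⟨hn1, i, hei⟩ := hBc
    haveI : NeZero (p i) := ⟨(hp i).ne_zero⟩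
    refine hsurj (p i) (hp i)
      ((((Int.castAddHom (ZMod (p i))).comp (Finsupp.applyAddHom (⟨0, by omega⟩ : Fin n))).comp
          (AddMonoidHom.fst _ _)).prod
       (((ZMod.castHom (dvd_pow_self (p i) hei) (ZMod (p i))).toAddMonoidHom.comp
          (evalHom _ i)).comp (AddMonoidHom.snd _ _))) ?_
    rintro ⟨u, v⟩
    obtain ⟨zu, rfl⟩ := ZMod.intCast_surjective u
    obtain ⟨mv, rfl⟩ := ZMod.natCast_zmod_surjective v
    refine ⟨(Finsupp.single ⟨0, by omega⟩ zu,
      DirectSum.of (fun i => ZMod (p i ^ e i)) i (mv : ZMod (p i ^ e i))), ?_⟩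
    simp [AddMonoidHom.prod_apply, DirectSum.of_eq_same, map_natCast]
  by_cases hC : ∃ i, ∃ j, i ≠ j ∧ e i ≠ 0 ∧ e j ≠ 0 ∧ p i = p j
  · exfalso
    obtain ⟨i, j, hij, hei, hej, hpij⟩ := hC
    haveI : NeZero (p i) := ⟨(hp i).ne_zero⟩
    refine hsurj (p i) (hp i)
      ((((ZMod.castHom (dvd_pow_self (p i) hei) (ZMod (p i))).toAddMonoidHom.comp
          (evalHom _ i)).comp (AddMonoidHom.snd _ _)).prod
       (((ZMod.castHom (show p i ∣ p j ^ e j from hpij ▸ dvd_pow_self (p j) hej)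
            (ZMod (p i))).toAddMonoidHom.comp
          (evalHom _ j)).comp (AddMonoidHom.snd _ _))) ?_
    rintro ⟨u, v⟩
    obtain ⟨mu, rfl⟩ := ZMod.natCast_zmod_surjective u
    obtain ⟨mv, rfl⟩ := ZMod.natCast_zmod_surjective v
    refine ⟨(0, DirectSum.of (fun i => ZMod (p i ^ e i)) i (mu : ZMod (p i ^ e i))
      + DirectSum.of (fun i => ZMod (p i ^ e i)) j (mv : ZMod (p j ^ e j))), ?_⟩
    simp [AddMonoidHom.prod_apply, DFinsupp.add_apply, DirectSum.of_eq_same,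
      DirectSum.of_eq_of_ne _ _ _ hij, DirectSum.of_eq_of_ne _ _ _ (Ne.symm hij), map_natCast]
  push_neg at hA hBc hC
  interval_cases n
  · -- n = 0 : chinese remainder case
    haveI : Subsingleton (Fin 0 →₀ ℤ) := ⟨fun a b => Finsupp.ext fun i => i.elim0⟩
    have hcop : Pairwise (Function.onFun Nat.Coprime fun i => p i ^ e i) := by
      intro i j hij
      by_cases hei : e i = 0
      · simp [Function.onFun, hei]
      by_cases hej : e j = 0
      · simp [Function.onFun, hej]
      · show Nat.Coprime (p i ^ e i) (p j ^ e j)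
        exact Nat.Coprime.pow _ _ ((Nat.coprime_primes (hp i) (hp j)).mpr (hC i j hij hei hej))
    let E1 := ZMod.prodEquivPi (fun i => p i ^ e i) hcop
    let E2 : (⨁ i, ZMod (p i ^ e i)) ≃+ (∀ i, ZMod (p i ^ e i)) :=
      { DFinsupp.equivFunOnFintype with
        map_add' := fun a b => funext fun i => DFinsupp.add_apply a b i }
    refine isAddCyclic_of_surjective (G' := ZMod (∏ i, p i ^ e i))
      (AddMonoidHom.prod 0 (E2.symm.toAddMonoidHom.comp E1.toAddEquiv.toAddMonoidHom)) ?_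
    rintro ⟨f, x⟩
    refine ⟨E1.symm (E2 x), Prod.ext (Subsingleton.elim _ _) ?_⟩
    simp
  · -- n = 1 : ℤ case
    have he : ∀ i, e i = 0 := hBc le_rfl
    haveI : ∀ i, Subsingleton (ZMod (p i ^ e i)) := fun i => by rw [he i, pow_zero]; infer_instance
    haveI : Subsingleton (⨁ i, ZMod (p i ^ e i)) :=
      ⟨fun a b => DFinsupp.ext fun i => Subsingleton.elim _ _⟩
    refine isAddCyclic_of_surjective (G' := ℤ)
      (AddMonoidHom.prod (Finsupp.singleAddHom (0 : Fin 1)) 0) ?_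
    rintro ⟨f, x⟩
    refine ⟨f 0, Prod.ext ?_ (Subsingleton.elim _ _)⟩
    simp only [AddMonoidHom.prod_apply]
    refine Finsupp.ext fun a => ?_
    obtain rfl : a = 0 := Subsingleton.elim _ _
    simp

end M1


section Master

variable {G : Type*} [Group G]

lemma master (S : Finset G)
    (hS : ∀ a ∈ S, ∀ b ∈ S, IsCyclic ↥(Subgroup.closure ({a, b} : Set G))) :
    IsCyclic ↥(Subgroup.closure (S : Set G)) := by
  -- commutativity of the closure
  have hcomm : ∀ x ∈ closure (S : Set G), ∀ y ∈ closure (S : Set G), Commute x y := by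
    intro x hx y hy
    induction hx, hy using closure_induction₂ with
    | mem a b ha hb =>
      obtain ⟨c, _, ⟨m, rfl⟩, ⟨k, rfl⟩⟩ := exists_common_gen (hS a ha b hb)
      exact (Commute.refl c).zpow_zpow m k
    | one_left b hb => exact Commute.one_left _
    | one_right a ha => exact Commute.one_right _
    | mul_left a b c ha hb hc h1 h2 => exact h1.mul_left h2
    | mul_right a b c ha hb hc h1 h2 => exact h1.mul_right h2
    | inv_left a b ha hb h1 => exact h1.inv_left
    | inv_right a b ha hb h1 => exact h1.inv_right
  letI : CommGroup ↥(closure (S : Set G)) :=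
    { (inferInstance : Group ↥(closure (S : Set G))) with
      mul_comm := fun a b => Subtype.ext (hcomm ↑a a.2 ↑b b.2) }
  haveI : Group.FG ↥(closure (S : Set G)) := Group.closure_finset_fg S
  rw [← isAddCyclic_additive_iff]
  apply isAddCyclic_of_no_surj
  intro q hq f hf
  have hq0 : ∀ v : ZMod q × ZMod q, (q : ℤ) • v = 0 := torsion_prod_zmod q
  have key : ∀ a₀ : ZMod q × ZMod q,
      (∀ a, ∀ ha : a ∈ S, f (Additive.ofMul
        (⟨a, subset_closure (Finset.mem_coe.mpr ha)⟩ : ↥(closure (S : Set G)))) ∈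
          AddSubgroup.zmultiples a₀) →
      ∀ g, ∀ hg : g ∈ closure (S : Set G),
        f (Additive.ofMul (⟨g, hg⟩ : ↥(closure (S : Set G)))) ∈ AddSubgroup.zmultiples a₀ := by
    intro a₀ hgen g hg
    induction hg using closure_induction with
    | mem a ha => exact hgen a ha
    | one =>
      show f (Additive.ofMul (1 : ↥(closure (S : Set G)))) ∈ _
      rw [ofMul_one, map_zero]
      exact zero_mem _
    | mul a b ha hb iha ihb =>
      show f (Additive.ofMul ((⟨a, ha⟩ : ↥(closure (S : Set G))) * ⟨b, hb⟩)) ∈ _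
      rw [ofMul_mul, map_add]
      exact AddSubgroup.add_mem _ iha ihb
    | inv a ha iha =>
      show f (Additive.ofMul ((⟨a, ha⟩ : ↥(closure (S : Set G)))⁻¹)) ∈ _
      rw [ofMul_inv, map_neg]
      exact AddSubgroup.neg_mem _ iha
  -- produce a₀
  have main : ∃ a₀ : ZMod q × ZMod q, ∀ g, ∀ hg : g ∈ closure (S : Set G),
      f (Additive.ofMul (⟨g, hg⟩ : ↥(closure (S : Set G)))) ∈ AddSubgroup.zmultiples a₀ := by
    by_cases hex : ∃ a, ∃ ha : a ∈ S, f (Additive.ofMul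
        (⟨a, subset_closure (Finset.mem_coe.mpr ha)⟩ : ↥(closure (S : Set G)))) ≠ 0
    · obtain ⟨b₀, hb₀S, hb₀⟩ := hex
      refine ⟨f (Additive.ofMul (⟨b₀, subset_closure (Finset.mem_coe.mpr hb₀S)⟩ :
        ↥(closure (S : Set G)))), key _ ?_⟩
      intro a ha
      obtain ⟨c, hc, ⟨m, hm⟩, ⟨k, hk⟩⟩ := exists_common_gen (hS b₀ hb₀S a ha)
      have hcK : c ∈ closure (S : Set G) := by
        refine closure_mono ?_ hc
        rw [Set.insert_subset_iff, Set.singleton_subset_iff]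
        exact ⟨Finset.mem_coe.mpr hb₀S, Finset.mem_coe.mpr ha⟩
      set w := f (Additive.ofMul (⟨c, hcK⟩ : ↥(closure (S : Set G)))) with hw
      have hzpow : ∀ (z : ℤ) (d : G) (hd : d ∈ closure (S : Set G)), c ^ z = d →
          f (Additive.ofMul (⟨d, hd⟩ : ↥(closure (S : Set G)))) = z • w := by
        intro z d hd hzd
        have : (⟨d, hd⟩ : ↥(closure (S : Set G))) = (⟨c, hcK⟩ : ↥(closure (S : Set G))) ^ z := by
          ext
          simp [← hzd]
        rw [this, ofMul_zpow, map_zsmul]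
      have h1 := hzpow m b₀ (subset_closure (Finset.mem_coe.mpr hb₀S)) hm
      have h2 := hzpow k a (subset_closure (Finset.mem_coe.mpr ha)) hk
      rw [h2]
      refine AddSubgroup.zsmul_mem _ ?_ k
      rw [h1]
      exact mem_zmultiples_smul_self hq hq0 (h1 ▸ hb₀)
    · push_neg at hex
      refine ⟨0, key 0 ?_⟩
      intro a ha
      rw [hex a ha]
      exact zero_mem _
  obtain ⟨a₀, hmain⟩ := main
  have hmem : ∀ v : ZMod q × ZMod q, v ∈ AddSubgroup.zmultiples a₀ := by
    intro v
    obtain ⟨y, hy⟩ := hf v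
    have := hmain (Additive.toMul y).1 (Additive.toMul y).2
    rw [show (⟨(Additive.toMul y).1, (Additive.toMul y).2⟩ :
        ↥(closure (S : Set G))) = Additive.toMul y from rfl, ofMul_toMul, hy] at this
    exact this
  exact vlem hq (hmem _) (hmem _)

end Master

end Helpers

/-- `Cyc_G(x)`. -/
def cycOf {G : Type*} [Group G] (x : G) : Set G :=
  {y | IsCyclic ↥(Subgroup.closure ({x, y} : Set G))}

/-- `Cyc_D(D)` for `D = Cyc_G(x)`. -/
def cycDD {G : Type*} [Group G] (x : G) : Set G :=
  {d ∈ cycOf x | ∀ e ∈ cycOf x, IsCyclic ↥(Subgroup.closure ({d, e} : Set G))}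

/-- For `D = Cyc_G(x)`, `Cyc_D(D)` is a subgroup of `G` containing `x`,
and it is locally cyclic. -/
theorem cycDD_locally_cyclic_subgroup {G : Type*} [Group G] (x : G) :
    (∃ H : Subgroup G, (H : Set G) = cycDD x) ∧ x ∈ cycDD x ∧
    (∀ S : Finset G, (S : Set G) ⊆ cycDD x →
      IsCyclic ↥(Subgroup.closure (S : Set G))) := by
  classical
  open Subgroup in
  have hdiag : ∀ g h : G, g = h → IsCyclic ↥(Subgroup.closure ({g, h} : Set G)) := by
    rintro g h rfl
    refine cyclic_of_le_zpowers (c := g) ?_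
    rintro y (rfl | rfl) <;> exact mem_zpowers _
  have hxDD : x ∈ cycDD x := by
    refine ⟨hdiag x x rfl, fun e he => he⟩
  have hpair : ∀ a ∈ cycDD x, ∀ b ∈ cycDD x, IsCyclic ↥(Subgroup.closure ({a, b} : Set G)) :=
    fun a ha b hb => ha.2 b hb.1
  have masterDD : ∀ T : Finset G, (∀ u ∈ T, u ∈ cycDD x) →
      IsCyclic ↥(Subgroup.closure (T : Set G)) :=
    fun T hT => master T (fun a ha b hb => hpair a (hT a ha) b (hT b hb))
  have hmul : ∀ a b : G, a ∈ cycDD x → b ∈ cycDD x → a * b ∈ cycDD x := by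
    intro a b ha hb
    constructor
    · -- a * b ∈ cycOf x
      haveI := masterDD {a, b, x} (by
        intro u hu
        simp only [Finset.mem_insert, Finset.mem_singleton] at hu
        rcases hu with rfl | rfl | rfl
        exacts [ha, hb, hxDD])
      refine Subgroup.isCyclic_of_le
        (H' := Subgroup.closure ((({a, b, x} : Finset G) : Set G))) ?_
      rw [closure_le]
      rintro y (rfl | rfl)
      · exact subset_closure (by simp)
      · exact mul_mem (subset_closure (by simp)) (subset_closure (by simp))
    · intro e he
      haveI := master {a, b, e} (by
        intro u hu v hv
        simp only [Finset.mem_insert, Finset.mem_singleton] at hu hv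
        rcases hu with rfl | rfl | rfl <;> rcases hv with rfl | rfl | rfl
        exacts [ha.2 _ ha.1, ha.2 _ hb.1, ha.2 _ he,
          hb.2 _ ha.1, hb.2 _ hb.1, hb.2 _ he,
          pair_swap_cyclic (ha.2 _ he), pair_swap_cyclic (hb.2 _ he), hdiag _ _ rfl])
      refine Subgroup.isCyclic_of_le
        (H' := Subgroup.closure ((({a, b, e} : Finset G) : Set G))) ?_
      rw [closure_le]
      rintro y (rfl | rfl)
      · exact mul_mem (subset_closure (by simp)) (subset_closure (by simp))
      · exact subset_closure (by simp)
  refine ⟨⟨{ carrier := cycDD x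
             one_mem' := ?_
             mul_mem' := fun {a b} ha hb => hmul a b ha hb
             inv_mem' := ?_ }, rfl⟩, hxDD, ?_⟩
  · -- 1 ∈ cycDD x
    refine ⟨cyclic_of_le_zpowers (c := x) ?_, fun e he => cyclic_of_le_zpowers (c := e) ?_⟩
    · rintro y (rfl | rfl)
      exacts [mem_zpowers _, one_mem _]
    · rintro y (rfl | rfl)
      exacts [one_mem _, mem_zpowers _]
  · -- inverses
    rintro a ha
    constructor
    · haveI : IsCyclic ↥(Subgroup.closure ({x, a} : Set G)) := ha.1
      refine Subgroup.isCyclic_of_le (H' := Subgroup.closure ({x, a} : Set G)) ?_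
      rw [closure_le]
      rintro y (rfl | rfl)
      · exact subset_closure (by simp)
      · exact inv_mem (subset_closure (by simp))
    · intro e he
      haveI : IsCyclic ↥(Subgroup.closure ({a, e} : Set G)) := ha.2 e he
      refine Subgroup.isCyclic_of_le (H' := Subgroup.closure ({a, e} : Set G)) ?_
      rw [closure_le]
      rintro y (rfl | rfl)
      · exact inv_mem (subset_closure (by simp))
      · exact subset_closure (by simp)
  · -- locally cyclic
    intro S hsub
    exact master S (fun a ha b hb =>
      (hsub (Finset.mem_coe.mpr ha)).2 b (hsub (Finset.mem_coe.mpr hb)).1)
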